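/- arXiv:2111.12392 — 3 statements merged into one kernel-verified Lean document; each statement's English description precedes it below -/
import Mathlib

section
/- A system C = (1, c₂, c₃) with 1 < c₂ < c₃ is noncanonical if and only if 0 < r < c₂ - q, where c₃ = q·c₂ + r with 0 ≤ r < c₂. -/
open Finset

/-- `x` is a representation of value `v` in the coin system `c 1, …, c n`. -/
def IsRepr (n : ℕ) (c : ℕ → ℕ) (v : ℕ) (x : ℕ → ℕ) : Prop :=
  ∑ i ∈ Finset.Icc 1 n, c i * x i = v

/-- Minimum number of coins over all representations of `v`. -/
noncomputable def opt (n : ℕ) (c : ℕ → ℕ) (v : ℕ) : ℕ :=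
  sInf {k | ∃ x : ℕ → ℕ, IsRepr n c v x ∧ ∑ i ∈ Finset.Icc 1 n, x i = k}

/-- Number of coins used by the greedy algorithm to pay `v`. -/
def grd (n : ℕ) (c : ℕ → ℕ) (v : ℕ) : ℕ :=
  if hv : v = 0 then 0
  else
    let m := ((Finset.Icc 1 n).filter (fun i => c i ≤ v)).sup c
    if hm : 0 < m then grd n c (v - m) + 1 else 0
termination_by v
decreasing_by omega

/-- The system is canonical: greedy is optimal for every positive value. -/
def Canonical (n : ℕ) (c : ℕ → ℕ) : Prop :=
  ∀ v, 0 < v → opt n c v = grd n c v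

/-- `w` is a counterexample to the system. -/
def IsCex (n : ℕ) (c : ℕ → ℕ) (w : ℕ) : Prop :=
  0 < w ∧ opt n c w < grd n c w

/-- `w` is the minimum counterexample to the system. -/
def MinCex (n : ℕ) (c : ℕ → ℕ) (w : ℕ) : Prop :=
  IsCex n c w ∧ ∀ u, IsCex n c u → w ≤ u

/-- A (currency) system: first coin is `1` and coins strictly increase. -/
def IsSystem (n : ℕ) (c : ℕ → ℕ) : Prop :=
  c 1 = 1 ∧ StrictMonoOn c (Set.Icc 1 n)

namespace ThreeCoinsAux

lemma sum3 (g : ℕ → ℕ) : ∑ i ∈ Finset.Icc 1 3, g i = g 1 + g 2 + g 3 := by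
  rw [show Finset.Icc 1 3 = ({1,2,3} : Finset ℕ) from by decide]
  simp [Finset.sum_insert, Finset.mem_insert]
  ring

/-- closed form of the greedy count for three coins -/
def fm (c : ℕ → ℕ) (v : ℕ) : ℕ := v / c 3 + (v % c 3) / c 2 + (v % c 3) % c 2

variable {c : ℕ → ℕ}

lemma sup_hi (h1 : c 1 = 1) (h2 : 1 < c 2) (h3 : c 2 < c 3) {v : ℕ} (hv : c 3 ≤ v) :
    ((Finset.Icc 1 3).filter (fun i => c i ≤ v)).sup c = c 3 := by
  apply le_antisymm
  · apply Finset.sup_le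
    intro i hi
    simp only [Finset.mem_filter, Finset.mem_Icc] at hi
    obtain ⟨⟨hi1, hi3⟩, hci⟩ := hi
    interval_cases i <;> omega
  · apply Finset.le_sup
    simp only [Finset.mem_filter, Finset.mem_Icc]
    exact ⟨⟨by omega, by omega⟩, hv⟩

lemma sup_mid (h1 : c 1 = 1) (h2 : 1 < c 2) (h3 : c 2 < c 3) {v : ℕ}
    (hv : c 2 ≤ v) (hv3 : v < c 3) :
    ((Finset.Icc 1 3).filter (fun i => c i ≤ v)).sup c = c 2 := by
  apply le_antisymm
  · apply Finset.sup_le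
    intro i hi
    simp only [Finset.mem_filter, Finset.mem_Icc] at hi
    obtain ⟨⟨hi1, hi3⟩, hci⟩ := hi
    interval_cases i <;> omega
  · apply Finset.le_sup
    simp only [Finset.mem_filter, Finset.mem_Icc]
    exact ⟨⟨by omega, by omega⟩, hv⟩

lemma sup_lo (h1 : c 1 = 1) (h2 : 1 < c 2) (h3 : c 2 < c 3) {v : ℕ}
    (hv : 1 ≤ v) (hv2 : v < c 2) :
    ((Finset.Icc 1 3).filter (fun i => c i ≤ v)).sup c = 1 := by
  apply le_antisymm
  · apply Finset.sup_le
    intro i hi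
    simp only [Finset.mem_filter, Finset.mem_Icc] at hi
    obtain ⟨⟨hi1, hi3⟩, hci⟩ := hi
    interval_cases i <;> omega
  · have h := Finset.le_sup (f := c)
      (show 1 ∈ (Finset.Icc 1 3).filter (fun i => c i ≤ v) from by
        simp only [Finset.mem_filter, Finset.mem_Icc]
        exact ⟨⟨le_refl 1, by omega⟩, by omega⟩)
    omega

lemma grd_zero : grd 3 c 0 = 0 := by rw [grd]; simp

lemma grd_hi (h1 : c 1 = 1) (h2 : 1 < c 2) (h3 : c 2 < c 3) {v : ℕ} (hv : c 3 ≤ v) :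
    grd 3 c v = grd 3 c (v - c 3) + 1 := by
  rw [grd, dif_neg (by omega : ¬ v = 0)]
  simp only [sup_hi h1 h2 h3 hv]
  rw [dif_pos (by omega : 0 < c 3)]

lemma grd_mid (h1 : c 1 = 1) (h2 : 1 < c 2) (h3 : c 2 < c 3) {v : ℕ}
    (hv : c 2 ≤ v) (hv3 : v < c 3) :
    grd 3 c v = grd 3 c (v - c 2) + 1 := by
  rw [grd, dif_neg (by omega : ¬ v = 0)]
  simp only [sup_mid h1 h2 h3 hv hv3]
  rw [dif_pos (by omega : 0 < c 2)]

lemma grd_lo (h1 : c 1 = 1) (h2 : 1 < c 2) (h3 : c 2 < c 3) {v : ℕ}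
    (hv : 1 ≤ v) (hv2 : v < c 2) :
    grd 3 c v = grd 3 c (v - 1) + 1 := by
  rw [grd, dif_neg (by omega : ¬ v = 0)]
  simp only [sup_lo h1 h2 h3 hv hv2]
  rw [dif_pos (by omega : (0:ℕ) < 1)]

lemma fm_small (h2 : 1 < c 2) (h3 : c 2 < c 3) {v : ℕ} (hlt : v < c 2) : fm c v = v := by
  simp only [fm]
  rw [Nat.mod_eq_of_lt (by omega : v < c 3), Nat.div_eq_of_lt (by omega : v < c 3),
      Nat.div_eq_of_lt hlt, Nat.mod_eq_of_lt hlt]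
  omega

lemma grd_eq_fm (h1 : c 1 = 1) (h2 : 1 < c 2) (h3 : c 2 < c 3) (v : ℕ) :
    grd 3 c v = fm c v := by
  induction v using Nat.strong_induction_on with
  | _ v ih =>
    rcases Nat.eq_zero_or_pos v with rfl | hv
    · rw [grd_zero]; simp [fm]
    rcases Nat.lt_or_ge v (c 2) with hlt | hge
    · rw [grd_lo h1 h2 h3 hv hlt, ih (v - 1) (by omega),
        fm_small h2 h3 hlt, fm_small h2 h3 (show v - 1 < c 2 by omega)]
      omega
    rcases Nat.lt_or_ge v (c 3) with hlt3 | hge3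
    · rw [grd_mid h1 h2 h3 hge hlt3, ih (v - c 2) (by omega)]
      simp only [fm]
      rw [Nat.mod_eq_of_lt hlt3, Nat.mod_eq_of_lt (show v - c 2 < c 3 by omega),
          Nat.div_eq_of_lt hlt3, Nat.div_eq_of_lt (show v - c 2 < c 3 by omega),
          Nat.div_eq_sub_div (by omega : 0 < c 2) hge, Nat.mod_eq_sub_mod hge]
      omega
    · rw [grd_hi h1 h2 h3 hge3, ih (v - c 3) (by omega)]
      simp only [fm]
      rw [Nat.div_eq_sub_div (by omega : 0 < c 3) hge3, Nat.mod_eq_sub_mod hge3]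
      omega

lemma div_mod_succ {b : ℕ} (hb : 0 < b) (u : ℕ) :
    ((u+1)/b = u/b ∧ (u+1)%b = u%b + 1) ∨ ((u+1)/b = u/b + 1 ∧ (u+1)%b = 0) := by
  have hdm := Nat.div_add_mod u b
  have hmlt : u % b < b := Nat.mod_lt _ hb
  rcases Nat.lt_or_ge (u % b + 1) b with h | h
  · left
    have e : u + 1 = b * (u / b) + (u % b + 1) := by omega
    rw [e, Nat.mul_add_div hb, Nat.mul_add_mod, Nat.div_eq_of_lt h, Nat.mod_eq_of_lt h]
    omega
  · right
    have e : u + 1 = b * (u / b) + b := by omega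
    rw [e, Nat.mul_add_div hb, Nat.mul_add_mod, Nat.div_self hb, Nat.mod_self]
    omega

lemma fm_step1 (h2 : 1 < c 2) (h3 : c 2 < c 3) (v : ℕ) : fm c (v + 1) ≤ fm c v + 1 := by
  have hb : 0 < c 2 := by omega
  have ht : 0 < c 3 := by omega
  simp only [fm]
  rcases div_mod_succ ht v with ⟨e1, e2⟩ | ⟨e1, e2⟩
  · rw [e1, e2]
    rcases div_mod_succ hb (v % c 3) with ⟨f1, f2⟩ | ⟨f1, f2⟩ <;> rw [f1, f2] <;>
      (have := Nat.mod_lt (v % c 3) hb; omega)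
  · rw [e1, e2, Nat.zero_div, Nat.zero_mod]
    have hD := Nat.zero_le ((v % c 3) / c 2)
    have hE := Nat.zero_le ((v % c 3) % c 2)
    omega

lemma fm_step3 (h3 : 0 < c 3) (v : ℕ) : fm c (v + c 3) = fm c v + 1 := by
  simp only [fm]
  rw [Nat.add_div_right v h3, Nat.add_mod_right]
  omega

lemma fm_step2 (h2 : 1 < c 2) (h3 : c 2 < c 3) (q r : ℕ)
    (hqr : c 3 = q * c 2 + r) (hr : r < c 2) (hH : r = 0 ∨ c 2 ≤ q + r) (v : ℕ) :
    fm c (v + c 2) ≤ fm c v + 1 := by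
  have hb : 0 < c 2 := by omega
  have ht : 0 < c 3 := by omega
  have hq : 1 ≤ q := by
    rcases Nat.eq_zero_or_pos q with h | h
    · subst h; simp at hqr; omega
    · exact h
  obtain ⟨q', rfl⟩ : ∃ q', q = q' + 1 := ⟨q - 1, by omega⟩
  have hte : c 3 = q' * c 2 + c 2 + r := by
    have : (q' + 1) * c 2 = q' * c 2 + c 2 := by ring
    omega
  have hdm := Nat.div_add_mod v (c 3)
  have hmlt : v % c 3 < c 3 := Nat.mod_lt _ ht
  simp only [fm]
  rcases Nat.lt_or_ge (v % c 3 + c 2) (c 3) with h | h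
  · have e : v + c 2 = c 3 * (v / c 3) + (v % c 3 + c 2) := by omega
    rw [e, Nat.mul_add_div ht, Nat.mul_add_mod, Nat.div_eq_of_lt h, Nat.mod_eq_of_lt h,
        Nat.add_div_right _ hb, Nat.add_mod_right]
    omega
  · have e2 : c 3 * (v / c 3) + c 3 = c 3 * (v / c 3 + 1) := by ring
    have e : v + c 2 = c 3 * (v / c 3 + 1) + (v % c 3 + c 2 - c 3) := by omega
    have hult : v % c 3 + c 2 - c 3 < c 2 := by omega
    rw [e, Nat.mul_add_div ht, Nat.mul_add_mod,
        Nat.div_eq_of_lt (show v % c 3 + c 2 - c 3 < c 3 by omega),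
        Nat.mod_eq_of_lt (show v % c 3 + c 2 - c 3 < c 3 by omega),
        Nat.div_eq_of_lt hult, Nat.mod_eq_of_lt hult]
    have hdm2 := Nat.div_add_mod (v % c 3) (c 2)
    have hM : (v % c 3) % c 2 < c 2 := Nat.mod_lt _ hb
    have hD_ge : q' ≤ (v % c 3) / c 2 := by
      rw [Nat.le_div_iff_mul_le hb]
      omega
    have hD_le : (v % c 3) / c 2 < q' + 2 := by
      rw [Nat.div_lt_iff_lt_mul hb]
      have : (q' + 2) * c 2 = q' * c 2 + c 2 + c 2 := by ring
      omega
    rcases (show (v % c 3) / c 2 = q' ∨ (v % c 3) / c 2 = q' + 1 by omega) with hD | hD <;>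
      rw [hD] at hdm2 ⊢
    · have hcomm : c 2 * q' = q' * c 2 := Nat.mul_comm _ _
      omega
    · have hcomm : c 2 * (q' + 1) = q' * c 2 + c 2 := by ring
      rcases hH with h0 | hle <;> omega

lemma fm_bound (h2 : 1 < c 2) (h3 : c 2 < c 3) (q r : ℕ)
    (hqr : c 3 = q * c 2 + r) (hr : r < c 2) (hH : r = 0 ∨ c 2 ≤ q + r)
    (a1 a2 a3 : ℕ) : fm c (a1 + a2 * c 2 + a3 * c 3) ≤ a1 + a2 + a3 := by
  induction a3 with
  | succ a3 ih =>
    have h := fm_step3 (show 0 < c 3 by omega) (a1 + a2 * c 2 + a3 * c 3)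
    have e : a1 + a2 * c 2 + (a3 + 1) * c 3 = a1 + a2 * c 2 + a3 * c 3 + c 3 := by ring
    rw [e, h]
    omega
  | zero =>
    induction a2 with
    | succ a2 ih =>
      have h := fm_step2 h2 h3 q r hqr hr hH (a1 + a2 * c 2 + 0 * c 3)
      have e : a1 + (a2 + 1) * c 2 + 0 * c 3 = a1 + a2 * c 2 + 0 * c 3 + c 2 := by ring
      rw [e]
      exact le_trans h (by omega)
    | zero =>
      induction a1 with
      | zero => simp [fm]
      | succ a1 ih =>
        have h := fm_step1 h2 h3 (a1 + 0 * c 2 + 0 * c 3)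
        have e : a1 + 1 + 0 * c 2 + 0 * c 3 = a1 + 0 * c 2 + 0 * c 3 + 1 := by ring
        rw [e]
        exact le_trans h (by omega)

lemma opt_le (h1 : c 1 = 1) {v k : ℕ} (x : ℕ → ℕ) (hx : IsRepr 3 c v x)
    (hk : x 1 + x 2 + x 3 = k) : opt 3 c v ≤ k := by
  apply Nat.sInf_le
  exact ⟨x, hx, by rw [sum3]; exact hk⟩

lemma opt_repr (h1 : c 1 = 1) (v : ℕ) :
    ∃ x, IsRepr 3 c v x ∧ x 1 + x 2 + x 3 = opt 3 c v := by
  have hne : {k | ∃ x : ℕ → ℕ, IsRepr 3 c v x ∧ ∑ i ∈ Finset.Icc 1 3, x i = k}.Nonempty := by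
    refine ⟨v, fun i => if i = 1 then v else 0, ?_, ?_⟩
    · show ∑ i ∈ Finset.Icc 1 3, c i * (if i = 1 then v else 0) = v
      rw [sum3]; simp [h1]
    · rw [sum3]; simp
  obtain ⟨x, hx, hs⟩ := Nat.sInf_mem hne
  refine ⟨x, hx, ?_⟩
  rw [sum3] at hs
  exact hs

end ThreeCoinsAux

open ThreeCoinsAux

theorem three_coins_noncanonical_iff (c : ℕ → ℕ) (h1 : c 1 = 1) (h2 : 1 < c 2)
    (h3 : c 2 < c 3) (q r : ℕ) (hqr : c 3 = q * c 2 + r) (hr : r < c 2) :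
    ¬ Canonical 3 c ↔ (0 < r ∧ r < c 2 - q) := by
  constructor
  · intro hnc
    by_contra hcond
    apply hnc
    have hH : r = 0 ∨ c 2 ≤ q + r := by omega
    intro v hv
    have hgf := grd_eq_fm h1 h2 h3 v
    have hle : opt 3 c v ≤ grd 3 c v := by
      have hx : IsRepr 3 c v
          (fun i => if i = 1 then (v % c 3) % c 2 else if i = 2 then (v % c 3) / c 2
            else v / c 3) := by
        show ∑ i ∈ Finset.Icc 1 3,
          c i * (if i = 1 then (v % c 3) % c 2 else if i = 2 then (v % c 3) / c 2
            else v / c 3) = v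
        rw [sum3]
        simp only [if_true, if_false]
        norm_num
        have e1 := Nat.div_add_mod v (c 3)
        have e2 := Nat.div_add_mod (v % c 3) (c 2)
        rw [h1]
        omega
      have hb := opt_le h1 _ hx rfl
      simp only [if_true, if_false] at hb
      norm_num at hb
      rw [hgf]
      simp only [fm]
      omega
    have hge : grd 3 c v ≤ opt 3 c v := by
      obtain ⟨x, hx, hs⟩ := opt_repr h1 v
      have hbd := fm_bound h2 h3 q r hqr hr hH (x 1) (x 2) (x 3)
      have hv' : x 1 + x 2 * c 2 + x 3 * c 3 = v := by
        have hxr : ∑ i ∈ Finset.Icc 1 3, c i * x i = v := hx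
        rw [sum3] at hxr
        rw [h1] at hxr
        have m2 : c 2 * x 2 = x 2 * c 2 := Nat.mul_comm _ _
        have m3 : c 3 * x 3 = x 3 * c 3 := Nat.mul_comm _ _
        omega
      rw [hv'] at hbd
      rw [hgf]
      omega
    omega
  · rintro ⟨hr0, hrq⟩
    intro hC
    have hq : 1 ≤ q := by
      rcases Nat.eq_zero_or_pos q with h | h
      · subst h; simp at hqr; omega
      · exact h
    have hwpos : 0 < (q + 1) * c 2 := Nat.mul_pos (by omega) (by omega)
    have hopt : opt 3 c ((q + 1) * c 2) ≤ q + 1 := by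
      apply opt_le h1 (fun i => if i = 2 then q + 1 else 0)
      · show ∑ i ∈ Finset.Icc 1 3, c i * (if i = 2 then q + 1 else 0) = (q + 1) * c 2
        rw [sum3]
        norm_num
        ring
      · norm_num
    have hgrd : grd 3 c ((q + 1) * c 2) = c 2 - r + 1 := by
      rw [grd_eq_fm h1 h2 h3]
      simp only [fm]
      have e : (q + 1) * c 2 = c 3 * 1 + (c 2 - r) := by
        have : (q + 1) * c 2 = q * c 2 + c 2 := by ring
        omega
      rw [e, Nat.mul_add_div (by omega), Nat.mul_add_mod]
      have hlt3 : c 2 - r < c 3 := by omega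
      have hlt2 : c 2 - r < c 2 := by omega
      rw [Nat.div_eq_of_lt hlt3, Nat.mod_eq_of_lt hlt3, Nat.div_eq_of_lt hlt2,
        Nat.mod_eq_of_lt hlt2]
      omega
    have heq := hC ((q + 1) * c 2) hwpos
    omega
end

section
/- A system C = (1, c₂, c₃) with 1 < c₂ < c₃ is canonical if and only if r = 0 or c₂ - q ≤ r, where c₃ = q·c₂ + r with 0 ≤ r < c₂. -/
open Finset

section Aux

variable {c : ℕ → ℕ}

lemma sum3 (f : ℕ → ℕ) : ∑ i ∈ Finset.Icc 1 3, f i = f 1 + f 2 + f 3 := by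
  show ∑ i ∈ ({1, 2, 3} : Finset ℕ), f i = _
  rw [Finset.sum_insert (by decide), Finset.sum_insert (by decide),
    Finset.sum_singleton]
  ring

lemma sup3 (h1 : c 1 = 1) (h2 : 1 < c 2) (h3 : c 2 < c 3) {v : ℕ} (hv : 0 < v) :
    ((Finset.Icc 1 3).filter (fun i => c i ≤ v)).sup c =
      if c 3 ≤ v then c 3 else if c 2 ≤ v then c 2 else 1 := by
  set s := (Finset.Icc 1 3).filter (fun i => c i ≤ v) with hs
  have h1mem : 1 ∈ s := by
    simp only [hs, Finset.mem_filter, Finset.mem_Icc, h1]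
    omega
  obtain ⟨j, hj, hje⟩ := Finset.exists_mem_eq_sup s ⟨1, h1mem⟩ c
  have hjmem := Finset.mem_filter.mp hj
  have hjI := Finset.mem_Icc.mp hjmem.1
  have hjle : c j ≤ v := hjmem.2
  have hj13 : j = 1 ∨ j = 2 ∨ j = 3 := by omega
  split_ifs with hb ha
  · have h3mem : 3 ∈ s := by
      simp only [hs, Finset.mem_filter, Finset.mem_Icc]
      omega
    have hge : c 3 ≤ s.sup c := Finset.le_sup h3mem
    rcases hj13 with h | h | h <;> subst h <;> omega
  · have h2mem : 2 ∈ s := by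
      simp only [hs, Finset.mem_filter, Finset.mem_Icc]
      omega
    have hge : c 2 ≤ s.sup c := Finset.le_sup h2mem
    rcases hj13 with h | h | h <;> subst h <;> omega
  · have hge : c 1 ≤ s.sup c := Finset.le_sup h1mem
    rcases hj13 with h | h | h <;> subst h <;> omega

lemma grd_zero : grd 3 c 0 = 0 := by rw [grd]; simp

lemma grd3_step (h1 : c 1 = 1) (h2 : 1 < c 2) (h3 : c 2 < c 3) {v : ℕ} (hv : 0 < v) :
    grd 3 c v = grd 3 c (v - (if c 3 ≤ v then c 3 else if c 2 ≤ v then c 2 else 1)) + 1 := by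
  have hm := sup3 h1 h2 h3 hv
  rw [grd, dif_neg (by omega : ¬ v = 0)]
  rw [hm]
  rw [dif_pos (by split_ifs <;> omega)]

lemma grd3_big (h1 : c 1 = 1) (h2 : 1 < c 2) (h3 : c 2 < c 3) {v : ℕ} (hb : c 3 ≤ v) :
    grd 3 c v = grd 3 c (v - c 3) + 1 := by
  have hv : 0 < v := by omega
  rw [grd3_step h1 h2 h3 hv, if_pos hb]

lemma grd3_mid (h1 : c 1 = 1) (h2 : 1 < c 2) (h3 : c 2 < c 3) {v : ℕ}
    (ha : c 2 ≤ v) (hb : v < c 3) :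
    grd 3 c v = grd 3 c (v - c 2) + 1 := by
  have hv : 0 < v := by omega
  rw [grd3_step h1 h2 h3 hv, if_neg (by omega), if_pos ha]

lemma grd3_small (h1 : c 1 = 1) (h2 : 1 < c 2) (h3 : c 2 < c 3) {v : ℕ}
    (hv : 0 < v) (ha : v < c 2) :
    grd 3 c v = grd 3 c (v - 1) + 1 := by
  rw [grd3_step h1 h2 h3 hv, if_neg (by omega), if_neg (by omega)]

lemma grd3_lt (h1 : c 1 = 1) (h2 : 1 < c 2) (h3 : c 2 < c 3) :
    ∀ v, v < c 2 → grd 3 c v = v := by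
  intro v
  induction v using Nat.strong_induction_on with
  | _ v ih =>
    intro hva
    rcases Nat.eq_zero_or_pos v with h0 | hv
    · subst h0; exact grd_zero
    · rw [grd3_small h1 h2 h3 hv hva, ih (v - 1) (by omega) (by omega)]
      omega

lemma grd3_le_self (h1 : c 1 = 1) (h2 : 1 < c 2) (h3 : c 2 < c 3) :
    ∀ v, grd 3 c v ≤ v := by
  intro v
  induction v using Nat.strong_induction_on with
  | _ v ih =>
    rcases Nat.eq_zero_or_pos v with h0 | hv
    · subst h0; rw [grd_zero]
    by_cases hb : c 3 ≤ v
    · rw [grd3_big h1 h2 h3 hb]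
      have := ih (v - c 3) (by omega)
      omega
    by_cases ha : c 2 ≤ v
    · rw [grd3_mid h1 h2 h3 ha (by omega)]
      have := ih (v - c 2) (by omega)
      omega
    · rw [grd3_lt h1 h2 h3 v (by omega)]

/-- The greedy count is achieved by an actual representation. -/
lemma grd3_repr (h1 : c 1 = 1) (h2 : 1 < c 2) (h3 : c 2 < c 3) :
    ∀ v, ∃ x : ℕ → ℕ, IsRepr 3 c v x ∧ x 1 + x 2 + x 3 = grd 3 c v := by
  intro v
  induction v using Nat.strong_induction_on with
  | _ v ih =>
    rcases Nat.eq_zero_or_pos v with h0 | hv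
    · subst h0
      exact ⟨fun _ => 0, by rw [IsRepr, sum3]; simp, by simp [grd_zero]⟩
    by_cases hb : c 3 ≤ v
    · obtain ⟨x, hx, hs⟩ := ih (v - c 3) (by omega)
      rw [IsRepr, sum3] at hx
      refine ⟨fun i => if i = 3 then x 3 + 1 else x i, ?_, ?_⟩
      · rw [IsRepr, sum3]
        simp only [reduceIte, show (1:ℕ) ≠ 3 by decide, show (2:ℕ) ≠ 3 by decide, if_false]
        have hmul : c 3 * (x 3 + 1) = c 3 * x 3 + c 3 := by ring
        omega
      · simp only [reduceIte, show (1:ℕ) ≠ 3 by decide, show (2:ℕ) ≠ 3 by decide, if_false]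
        rw [grd3_big h1 h2 h3 hb]
        omega
    by_cases ha : c 2 ≤ v
    · obtain ⟨x, hx, hs⟩ := ih (v - c 2) (by omega)
      rw [IsRepr, sum3] at hx
      refine ⟨fun i => if i = 2 then x 2 + 1 else x i, ?_, ?_⟩
      · rw [IsRepr, sum3]
        simp only [reduceIte, show (1:ℕ) ≠ 2 by decide, show (3:ℕ) ≠ 2 by decide, if_false]
        have hmul : c 2 * (x 2 + 1) = c 2 * x 2 + c 2 := by ring
        omega
      · simp only [reduceIte, show (1:ℕ) ≠ 2 by decide, show (3:ℕ) ≠ 2 by decide, if_false]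
        rw [grd3_mid h1 h2 h3 ha (by omega)]
        omega
    · refine ⟨fun i => if i = 1 then v else 0, ?_, ?_⟩
      · rw [IsRepr, sum3]
        simp only [reduceIte, show (2:ℕ) ≠ 1 by decide, show (3:ℕ) ≠ 1 by decide, if_false,
          h1, one_mul, mul_zero]
        omega
      · simp only [reduceIte, show (2:ℕ) ≠ 1 by decide, show (3:ℕ) ≠ 1 by decide, if_false]
        rw [grd3_lt h1 h2 h3 v (by omega)]
        omega

/-- Under the canonicity condition, the greedy count is at most any representation's count. -/
lemma grd3_le_repr (h1 : c 1 = 1) (h2 : 1 < c 2) (h3 : c 2 < c 3) {q r : ℕ}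
    (hqr : c 3 = q * c 2 + r) (hr : r < c 2) (hcond : r = 0 ∨ c 2 ≤ q + r) :
    ∀ v x, IsRepr 3 c v x → grd 3 c v ≤ x 1 + x 2 + x 3 := by
  have hq : 1 ≤ q := by
    rcases Nat.eq_zero_or_pos q with h0 | h; · subst h0; simp at hqr; omega
    exact h
  intro v
  induction v using Nat.strong_induction_on with
  | _ v ih =>
    intro x hx
    rw [IsRepr, sum3, h1, one_mul] at hx
    rcases Nat.eq_zero_or_pos v with h0 | hv
    · subst h0; rw [grd_zero]; omega
    by_cases hb : c 3 ≤ v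
    · -- greedy takes c 3
      rw [grd3_big h1 h2 h3 hb]
      by_cases hx3 : x 3 = 0
      · -- no coin c 3 in the representation
        rw [hx3, mul_zero, add_zero] at hx
        by_cases hx2 : q + 1 ≤ x 2
        · -- many c 2 coins
          rcases hcond with hr0 | hc
          · -- r = 0 : replace q coins c 2 by one coin c 3
            subst hr0
            rw [add_zero] at hqr
            have hmul : c 2 * (x 2 - q) + c 2 * q = c 2 * x 2 := by
              rw [← Nat.mul_add, Nat.sub_add_cancel (by omega)]
            have hrep : IsRepr 3 c (v - c 3)
                (fun i => if i = 1 then x 1 else if i = 2 then x 2 - q else 0) := by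
              rw [IsRepr, sum3]
              norm_num [h1]
              have hcm : q * c 2 = c 2 * q := by ring
              omega
            have := ih (v - c 3) (by omega) _ hrep
            simp only at this
            norm_num at this
            omega
          · -- c 2 ≤ q + r : replace q+1 coins c 2 by one coin c 3 and c 2 - r ones
            have hmul : c 2 * (x 2 - (q + 1)) + c 2 * (q + 1) = c 2 * x 2 := by
              rw [← Nat.mul_add, Nat.sub_add_cancel (by omega)]
            have hmul2 : c 2 * (q + 1) = c 2 * q + c 2 := by ring
            have hrep : IsRepr 3 c (v - c 3)
                (fun i => if i = 1 then x 1 + (c 2 - r) else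
                  if i = 2 then x 2 - (q + 1) else 0) := by
              rw [IsRepr, sum3]
              norm_num [h1]
              have hcm : q * c 2 = c 2 * q := by ring
              omega
            have := ih (v - c 3) (by omega) _ hrep
            simp only at this
            norm_num at this
            omega
        · -- few c 2 coins : pay c 3 from the ones
          have hmul : c 2 * (q - x 2) + c 2 * x 2 = c 2 * q := by
            rw [← Nat.mul_add, Nat.sub_add_cancel (by omega)]
          have hcm : q * c 2 = c 2 * q := by ring
          have key : c 2 * (q - x 2) + r ≤ x 1 := by omega
          have hrep : IsRepr 3 c (v - c 3)
              (fun i => if i = 1 then x 1 - (c 2 * (q - x 2) + r) else 0) := by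
            rw [IsRepr, sum3]
            norm_num [h1]
            omega
          have := ih (v - c 3) (by omega) _ hrep
          simp only at this
          norm_num at this
          -- need : 1 ≤ c 2 * (q - x 2) + r + x 2
          have hlast : 1 ≤ c 2 * (q - x 2) + r + x 2 := by
            rcases Nat.lt_or_ge (x 2) q with hlt | hge
            · have : c 2 * 1 ≤ c 2 * (q - x 2) := Nat.mul_le_mul_left _ (by omega)
              omega
            · omega
          omega
      · -- use a c 3 coin directly
        have hmul : c 3 * (x 3 - 1) + c 3 = c 3 * x 3 := by
          rw [← Nat.mul_succ]; congr 1; omega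
        have hrep : IsRepr 3 c (v - c 3)
            (fun i => if i = 3 then x 3 - 1 else x i) := by
          rw [IsRepr, sum3]
          norm_num [h1]
          omega
        have := ih (v - c 3) (by omega) _ hrep
        simp only at this
        norm_num at this
        omega
    by_cases ha : c 2 ≤ v
    · -- greedy takes c 2
      rw [grd3_mid h1 h2 h3 ha (by omega)]
      have hx3 : x 3 = 0 := by
        by_contra h
        have : c 3 * 1 ≤ c 3 * x 3 := Nat.mul_le_mul_left _ (by omega)
        omega
      rw [hx3, mul_zero, add_zero] at hx
      by_cases hx2 : 1 ≤ x 2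
      · have hmul : c 2 * (x 2 - 1) + c 2 = c 2 * x 2 := by
          rw [← Nat.mul_succ]; congr 1; omega
        have hrep : IsRepr 3 c (v - c 2)
            (fun i => if i = 1 then x 1 else if i = 2 then x 2 - 1 else 0) := by
          rw [IsRepr, sum3]
          norm_num [h1]
          omega
        have := ih (v - c 2) (by omega) _ hrep
        simp only at this
        norm_num at this
        omega
      · have hx2' : x 2 = 0 := by omega
        rw [hx2', mul_zero, add_zero] at hx
        have := grd3_le_self h1 h2 h3 (v - c 2)
        omega
    · -- greedy takes 1; all coins c 2, c 3 absent
      have hx3 : x 3 = 0 := by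
        by_contra h
        have : c 3 * 1 ≤ c 3 * x 3 := Nat.mul_le_mul_left _ (by omega)
        omega
      have hx2 : x 2 = 0 := by
        by_contra h
        have : c 2 * 1 ≤ c 2 * x 2 := Nat.mul_le_mul_left _ (by omega)
        omega
      rw [hx3, hx2, mul_zero, mul_zero, add_zero, add_zero] at hx
      rw [grd3_lt h1 h2 h3 v (by omega)]
      omega

lemma opt_le_grd3 (h1 : c 1 = 1) (h2 : 1 < c 2) (h3 : c 2 < c 3) (v : ℕ) :
    opt 3 c v ≤ grd 3 c v := by
  obtain ⟨x, hx, hs⟩ := grd3_repr h1 h2 h3 v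
  apply Nat.sInf_le
  exact ⟨x, hx, by rw [sum3]; exact hs⟩

end Aux

theorem three_coins_canonical_iff (c : ℕ → ℕ) (h1 : c 1 = 1) (h2 : 1 < c 2)
    (h3 : c 2 < c 3) (q r : ℕ) (hqr : c 3 = q * c 2 + r) (hr : r < c 2) :
    Canonical 3 c ↔ (r = 0 ∨ c 2 - q ≤ r) := by
  have hq : 1 ≤ q := by
    rcases Nat.eq_zero_or_pos q with h0 | h; · subst h0; simp at hqr; omega
    exact h
  constructor
  · -- canonical → condition, by contraposition
    intro hcan
    by_contra hcon
    push_neg at hcon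
    obtain ⟨hr0, hcq⟩ := hcon
    have hcond : q + r < c 2 := by omega
    set v := (q + 1) * c 2 with hv
    have hvb : c 3 ≤ v := by
      rw [hqr, hv]; nlinarith
    have hgrd : grd 3 c v = (c 2 - r) + 1 := by
      rw [grd3_big h1 h2 h3 hvb]
      have hsub : v - c 3 = c 2 - r := by
        rw [hqr, hv]
        have : (q + 1) * c 2 = q * c 2 + c 2 := by ring
        omega
      rw [hsub, grd3_lt h1 h2 h3 (c 2 - r) (by omega)]
    have hopt : opt 3 c v ≤ q + 1 := by
      apply Nat.sInf_le
      refine ⟨fun i => if i = 2 then q + 1 else 0, ?_, ?_⟩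
      · rw [IsRepr, sum3]
        norm_num
        ring
      · rw [sum3]
        norm_num
    have hvpos : 0 < v := by positivity
    have := hcan v hvpos
    omega
  · -- condition → canonical
    intro hcond
    intro v hv
    have hcond' : r = 0 ∨ c 2 ≤ q + r := by omega
    refine le_antisymm (opt_le_grd3 h1 h2 h3 v) ?_
    have hne : {k | ∃ x : ℕ → ℕ, IsRepr 3 c v x ∧ ∑ i ∈ Finset.Icc 1 3, x i = k}.Nonempty := by
      obtain ⟨x, hx, hs⟩ := grd3_repr h1 h2 h3 v
      exact ⟨_, x, hx, rfl⟩
    obtain ⟨x, hx, hs⟩ := Nat.sInf_mem hne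
    rw [opt, ← hs, sum3]
    exact grd3_le_repr h1 h2 h3 hqr hr hcond' v x hx
end

section
/- Suppose C = (1, c₂, ..., cₙ) is canonical while the subsystem C' = (1, c₂, ..., c_{n-1}) is noncanonical, and let w' be the minimum counterexample to C'. Then cₙ ≤ w'. -/
open Finset

lemma filter_eq_aux (n : ℕ) (c : ℕ → ℕ) (v : ℕ) (hv : v < c n) :
    ((Finset.Icc 1 n).filter (fun i => c i ≤ v)) =
    ((Finset.Icc 1 (n-1)).filter (fun i => c i ≤ v)) := by
  ext i
  simp only [Finset.mem_filter, Finset.mem_Icc]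
  constructor
  · rintro ⟨⟨h1, h2⟩, h3⟩
    have hin : i ≠ n := by rintro rfl; omega
    exact ⟨⟨h1, by omega⟩, h3⟩
  · rintro ⟨⟨h1, h2⟩, h3⟩
    exact ⟨⟨h1, by omega⟩, h3⟩

lemma grd_eq_aux (n : ℕ) (c : ℕ → ℕ) :
    ∀ v, v < c n → grd n c v = grd (n-1) c v := by
  intro v
  induction v using Nat.strong_induction_on with
  | _ v ih =>
    intro hv
    rw [grd, grd]
    by_cases h0 : v = 0
    · simp [h0]
    · simp only [h0, dif_neg, not_false_iff]
      rw [filter_eq_aux n c v hv]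
      set m := ((Finset.Icc 1 (n-1)).filter (fun i => c i ≤ v)).sup c with hm
      by_cases hmp : 0 < m
      · have hmv : m ≤ v := by
          apply Finset.sup_le
          intro i hi
          exact (Finset.mem_filter.mp hi).2
        rw [dif_pos hmp, dif_pos hmp, ih (v - m) (by omega) (by omega)]
      · rw [dif_neg hmp, dif_neg hmp]

lemma opt_eq_aux (n : ℕ) (c : ℕ → ℕ) (hn : 1 ≤ n) (v : ℕ) (hv : v < c n) :
    opt n c v = opt (n-1) c v := by
  obtain ⟨m, rfl⟩ : ∃ m, n = m + 1 := ⟨n - 1, by omega⟩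
  simp only [Nat.add_sub_cancel]
  unfold opt
  congr 1
  ext k
  simp only [Set.mem_setOf_eq, IsRepr]
  constructor
  · rintro ⟨x, hx, hk⟩
    rw [Finset.sum_Icc_succ_top (by omega)] at hx
    have hxn : x (m+1) = 0 := by
      rcases Nat.eq_zero_or_pos (x (m+1)) with h | h
      · exact h
      · have : c (m+1) ≤ c (m+1) * x (m+1) := Nat.le_mul_of_pos_right _ h
        omega
    rw [Finset.sum_Icc_succ_top (by omega)] at hk
    rw [hxn] at hx hk
    exact ⟨x, by omega, by omega⟩
  · rintro ⟨x, hx, hk⟩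
    refine ⟨Function.update x (m+1) 0, ?_, ?_⟩
    · rw [Finset.sum_Icc_succ_top (by omega)]
      rw [Finset.sum_congr rfl (fun i hi => by
        rw [Function.update_of_ne (by simp at hi; omega)])]
      simp [hx]
    · rw [Finset.sum_Icc_succ_top (by omega)]
      rw [Finset.sum_congr rfl (fun i hi => by
        rw [Function.update_of_ne (by simp at hi; omega)])]
      simp [hk]

theorem min_cex_of_subsystem_ge (n : ℕ) (c : ℕ → ℕ) (hn : 2 ≤ n)
    (hsys : IsSystem n c) (hC : Canonical n c) (hC' : ¬ Canonical (n - 1) c)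
    (w' : ℕ) (hw' : MinCex (n - 1) c w') :
    c n ≤ w' := by
  by_contra h
  push_neg at h
  obtain ⟨⟨hw0, hwlt⟩, _⟩ := hw'
  have h1 : opt n c w' = opt (n-1) c w' := opt_eq_aux n c (by omega) w' h
  have h2 : grd n c w' = grd (n-1) c w' := grd_eq_aux n c w' h
  have h3 := hC w' hw0
  omega
end
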